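/- Let p ∈ S be a klt surface singularity with n exceptional components E₁, …, Eₙ in its minimal resolution, with coefficients e₁, …, eₙ, and suppose the coefficient e(p) = max eᵢ satisfies e(p) < 3/5. Then n ≥ Σᵢ eᵢ(−2 − Eᵢ²), with equality if and only if p is the cyclic singularity of type (4) (a single (−4)-curve). -/

import Mathlib

/-- Abstract model of a klt surface singularity `p ∈ S`: the intersection
matrix of the `n` exceptional curves `E₁, …, Eₙ` of its minimal resolution
(each `Eᵢ` a smooth rational curve with `Eᵢ² ≤ −2`, pairwise intersections
`0` or `1`, connected dual graph) together with the coefficients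
`e₁, …, eₙ` defined by `K_{S̃} + Σ eᵢEᵢ = π*K_S`. -/
structure KltSingularityGerm where
  /-- the number of exceptional components -/
  n : ℕ
  /-- the intersection matrix `Eᵢ·Eⱼ` of the exceptional curves -/
  mat : Fin n → Fin n → ℤ
  mat_symm : ∀ i j, mat i j = mat j i
  /-- the resolution is minimal: `Eᵢ² ≤ −2` -/
  diag_le : ∀ i, mat i i ≤ -2
  offdiag : ∀ i j, i ≠ j → mat i j = 0 ∨ mat i j = 1
  /-- the dual graph is connected -/
  connected : (SimpleGraph.fromRel fun i j => mat i j = 1).Connected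
  /-- the coefficients `eᵢ` of the exceptional curves -/
  e : Fin n → ℝ
  e_nonneg : ∀ i, 0 ≤ e i
  /-- the singularity is klt -/
  e_lt_one : ∀ i, e i < 1
  /-- the defining equations `(K_{S̃} + Σⱼ eⱼEⱼ)·Eᵢ = 0`, using adjunction
  `K_{S̃}·Eᵢ = −2 − Eᵢ²` -/
  coeff_eq : ∀ i, (-2 - (mat i i : ℝ)) + ∑ j, e j * (mat j i : ℝ) = 0

/-- for a klt singularity with coefficient `max eᵢ < 3/5` one has
`n ≥ Σ eᵢ(−2 − Eᵢ²)`, with equality if and only if the singularity is the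
cyclic singularity of type `(4)`, i.e. a single `(−4)`-curve. -/
theorem klt_germ_component_bound (G : KltSingularityGerm)
    (hpos : 0 < G.n) (hsmall : ∀ i, G.e i < 3 / 5) :
    (∑ i, G.e i * (-2 - (G.mat i i : ℝ))) ≤ (G.n : ℝ) ∧
    ((∑ i, G.e i * (-2 - (G.mat i i : ℝ))) = (G.n : ℝ) ↔
      G.n = 1 ∧ ∀ i, G.mat i i = -4) := by
  classical
  -- nonnegativity of off-diagonal terms
  have hnn : ∀ i k : Fin G.n, k ≠ i → 0 ≤ G.e k * (G.mat k i : ℝ) := by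
    intro i k hk
    rcases G.offdiag k i hk with h0 | h1
    · rw [h0]; norm_num
    · rw [h1]; simpa using G.e_nonneg k
  -- the key rearranged equation
  have key : ∀ i : Fin G.n,
      G.e i * ((G.mat i i : ℝ)) + (-2 - (G.mat i i : ℝ))
        + ∑ j ∈ Finset.univ.erase i, G.e j * (G.mat j i : ℝ) = 0 := by
    intro i
    have h := G.coeff_eq i
    rw [← Finset.add_sum_erase _ _ (Finset.mem_univ i)] at h
    linarith
  have hRnn : ∀ i : Fin G.n,
      0 ≤ ∑ j ∈ Finset.univ.erase i, G.e j * (G.mat j i : ℝ) := by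
    intro i
    exact Finset.sum_nonneg fun j hj => hnn i j (Finset.mem_erase.mp hj).1
  -- a single neighbor term bounds the neighbor sum from below
  have hterm : ∀ i j : Fin G.n, j ≠ i → G.mat j i = 1 →
      G.e j ≤ ∑ k ∈ Finset.univ.erase i, G.e k * (G.mat k i : ℝ) := by
    intro i j hji h1
    have := Finset.single_le_sum (f := fun k => G.e k * (G.mat k i : ℝ))
      (fun k hk => hnn i k (Finset.mem_erase.mp hk).1)
      (Finset.mem_erase.mpr ⟨hji, Finset.mem_univ j⟩)
    simpa [h1] using this
  -- no self-intersection below -4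
  have hA : ∀ i, (-4 : ℤ) ≤ G.mat i i := by
    intro i
    by_contra hlt
    push_neg at hlt
    have h5 : ((G.mat i i : ℤ) : ℝ) ≤ -5 := by exact_mod_cast (by omega : G.mat i i ≤ -5)
    have h1 := key i
    have h2 := hRnn i
    have h3 := hsmall i
    nlinarith [mul_pos (by linarith : (0:ℝ) < 3/5 - G.e i)
      (by linarith : (0:ℝ) < -((G.mat i i : ℤ) : ℝ))]
  rcases Nat.lt_or_ge 1 G.n with hbig | hone
  · -- case n ≥ 2 : strict inequality
    -- every vertex has a neighbor
    have hnb : ∀ i : Fin G.n, ∃ j, j ≠ i ∧ G.mat j i = 1 := by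
      intro i
      obtain ⟨k, hk⟩ :=
        Fintype.exists_ne_of_one_lt_card (by simpa using hbig) i
      obtain ⟨w⟩ := G.connected.preconnected i k
      have hadj := w.adj_snd (SimpleGraph.Walk.not_nil_of_ne (Ne.symm hk))
      rw [SimpleGraph.fromRel_adj] at hadj
      obtain ⟨hne, hor⟩ := hadj
      refine ⟨w.getVert 1, Ne.symm hne, ?_⟩
      rcases hor with h | h
      · rw [G.mat_symm]; exact h
      · exact h
    choose f hf1 hf2 using hnb
    set P : Finset (Fin G.n) := Finset.univ.filter (fun i => G.mat i i = -4) with hP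
    -- a (-4)-vertex has e ≥ 1/2
    have he4 : ∀ i, G.mat i i = -4 → 1/2 ≤ G.e i := by
      intro i hi
      have h := key i
      rw [hi] at h
      push_cast at h
      have := hRnn i
      linarith
    -- neighbors of a (-4)-vertex have e < 2/5
    have hnb4 : ∀ i j, G.mat i i = -4 → j ≠ i → G.mat j i = 1 → G.e j < 2/5 := by
      intro i j hi hji h1
      have h := key i
      rw [hi] at h
      push_cast at h
      have ht := hterm i j hji h1
      have := hsmall i
      linarith
    -- the partner of a (-4)-vertex is not a (-4)-vertex
    have hfP : ∀ i ∈ P, f i ∉ P := by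
      intro i hi hfi
      rw [hP, Finset.mem_filter] at hi hfi
      have h1 := he4 _ hfi.2
      have h2 := hnb4 i (f i) hi.2 (hf1 i) (hf2 i)
      linarith
    -- the partner map is injective on (-4)-vertices
    have hinj : Set.InjOn f ↑P := by
      intro i1 h1m i2 h2m heq
      by_contra hne
      rw [Finset.coe_filter] at h1m h2m
      have hi1 : G.mat i1 i1 = -4 := h1m.2
      have hi2 : G.mat i2 i2 = -4 := h2m.2
      set j := f i1 with hj
      have hji1 : j ≠ i1 := hf1 i1
      have hji2 : j ≠ i2 := heq ▸ hf1 i2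
      have hm1 : G.mat i1 j = 1 := by rw [G.mat_symm]; exact hf2 i1
      have hm2 : G.mat i2 j = 1 := by rw [G.mat_symm, heq]; exact hf2 i2
      -- the neighbor sum at j contains both e i1 and e i2
      have hsub : ({i1, i2} : Finset (Fin G.n)) ⊆ Finset.univ.erase j := by
        intro k hk
        rw [Finset.mem_insert, Finset.mem_singleton] at hk
        rcases hk with rfl | rfl
        · exact Finset.mem_erase.mpr ⟨Ne.symm hji1, Finset.mem_univ _⟩
        · exact Finset.mem_erase.mpr ⟨Ne.symm hji2, Finset.mem_univ _⟩
      have hpair : G.e i1 + G.e i2 ≤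
          ∑ k ∈ Finset.univ.erase j, G.e k * (G.mat k j : ℝ) := by
        have hle := Finset.sum_le_sum_of_subset_of_nonneg hsub
          (fun k hk _ => hnn j k (Finset.mem_erase.mp hk).1)
        rw [Finset.sum_pair hne] at hle
        rw [hm1, hm2] at hle
        simpa using hle
      have hR1 : (1:ℝ) ≤ ∑ k ∈ Finset.univ.erase j, G.e k * (G.mat k j : ℝ) := by
        have := he4 i1 hi1
        have := he4 i2 hi2
        linarith
      -- so e j ≥ 1/2, contradicting e j < 2/5
      have hkey := key j
      have hd2 : ((G.mat j j : ℤ) : ℝ) ≤ -2 := by exact_mod_cast G.diag_le j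
      have hd4 : (-4:ℝ) ≤ ((G.mat j j : ℤ) : ℝ) := by exact_mod_cast hA j
      have hjlt : G.e j < 2/5 := hnb4 i1 j hi1 hji1 (hf2 i1)
      nlinarith [mul_pos (by linarith : (0:ℝ) < 2/5 - G.e j)
        (by linarith : (0:ℝ) < -((G.mat j j : ℤ) : ℝ))]
    -- hence 2·|P| ≤ n
    have hcard : 2 * P.card ≤ G.n := by
      have h1 : (P.image f).card = P.card := Finset.card_image_of_injOn hinj
      have h2 : Disjoint P (P.image f) := by
        rw [Finset.disjoint_left]
        intro a ha hai
        obtain ⟨b, hb, hba⟩ := Finset.mem_image.mp hai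
        exact hfP b hb (hba ▸ ha)
      have h3 := Finset.card_union_of_disjoint h2
      have h4 : (P ∪ P.image f).card ≤ G.n := by
        simpa using Finset.card_le_univ (P ∪ P.image f)
      omega
    -- pointwise bounds on contributions
    have hb1 : ∑ i ∈ P, G.e i * (-2 - (G.mat i i : ℝ)) ≤ (P.card : ℝ) * (6/5) := by
      have := Finset.sum_le_card_nsmul P (fun i => G.e i * (-2 - (G.mat i i : ℝ)))
        (6/5) ?_
      · simpa [nsmul_eq_mul] using this
      · intro i hi
        rw [hP, Finset.mem_filter] at hi
        show G.e i * (-2 - (G.mat i i : ℝ)) ≤ 6/5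
        rw [hi.2]
        push_cast
        have := hsmall i
        have := G.e_nonneg i
        nlinarith
    have hb2 : ∑ i ∈ Finset.univ.filter (fun i => ¬ G.mat i i = -4),
        G.e i * (-2 - (G.mat i i : ℝ)) ≤
        (((Finset.univ.filter (fun i : Fin G.n => ¬ G.mat i i = -4)).card : ℝ)) * (3/5) := by
      have := Finset.sum_le_card_nsmul
        (Finset.univ.filter (fun i : Fin G.n => ¬ G.mat i i = -4))
        (fun i => G.e i * (-2 - (G.mat i i : ℝ))) (3/5) ?_
      · simpa [nsmul_eq_mul] using this
      · intro i hi
        rw [Finset.mem_filter] at hi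
        have h23 : G.mat i i = -2 ∨ G.mat i i = -3 := by
          have := G.diag_le i
          have := hA i
          have := hi.2
          omega
        show G.e i * (-2 - (G.mat i i : ℝ)) ≤ 3/5
        rcases h23 with hm | hm <;> rw [hm] <;> push_cast
        · have := G.e_nonneg i
          nlinarith
        · have := hsmall i
          have := G.e_nonneg i
          nlinarith
    have hsplit := Finset.sum_filter_add_sum_filter_not Finset.univ
      (fun i : Fin G.n => G.mat i i = -4) (fun i => G.e i * (-2 - (G.mat i i : ℝ)))
    have hcards : P.card +
        (Finset.univ.filter (fun i : Fin G.n => ¬ G.mat i i = -4)).card = G.n := by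
      rw [hP]
      rw [Finset.card_filter_add_card_filter_not]
      simp
    -- assemble the strict inequality
    have hS : ∑ i, G.e i * (-2 - (G.mat i i : ℝ)) < (G.n : ℝ) := by
      have hc1 : (P.card : ℝ) +
          ((Finset.univ.filter (fun i : Fin G.n => ¬ G.mat i i = -4)).card : ℝ)
          = (G.n : ℝ) := by exact_mod_cast hcards
      have hc2 : 2 * (P.card : ℝ) ≤ (G.n : ℝ) := by exact_mod_cast hcard
      have hc3 : (2:ℝ) ≤ (G.n : ℝ) := by exact_mod_cast hbig
      rw [← hsplit, ← hP]
      linarith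
    refine ⟨le_of_lt hS, ?_, ?_⟩
    · intro heq
      exact absurd heq (ne_of_lt hS)
    · rintro ⟨hn1, -⟩
      exact absurd hn1 (by omega)
  · -- case n = 1
    have hn1 : G.n = 1 := by omega
    set i0 : Fin G.n := ⟨0, hpos⟩ with hi0
    have hall : ∀ j : Fin G.n, j = i0 := by
      intro j
      apply Fin.ext
      have := j.isLt
      omega
    have hsum1 : ∀ f : Fin G.n → ℝ, ∑ j, f j = f i0 := fun f =>
      Fintype.sum_eq_single i0 (fun j hj => (hj (hall j)).elim)
    have h := G.coeff_eq i0
    rw [hsum1] at h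
    rw [hsum1]
    have hcast : ((G.n : ℕ) : ℝ) = 1 := by rw [hn1]; norm_num
    rw [hcast]
    have hiff : (G.n = 1 ∧ ∀ i, G.mat i i = -4) ↔ G.mat i0 i0 = -4 := by
      constructor
      · rintro ⟨-, h4'⟩
        exact h4' i0
      · intro hm
        exact ⟨hn1, fun i => (hall i) ▸ hm⟩
    rw [hiff]
    have htri : G.mat i0 i0 = -2 ∨ G.mat i0 i0 = -3 ∨ G.mat i0 i0 = -4 := by
      have := G.diag_le i0
      have := hA i0
      omega
    rcases htri with hm | hm | hm <;> rw [hm] at h ⊢ <;> push_cast at h ⊢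
    · constructor
      · nlinarith
      · constructor
        · intro he
          exfalso
          nlinarith
        · intro h34
          norm_num at h34
    · constructor
      · nlinarith
      · constructor
        · intro he
          exfalso
          nlinarith
        · intro h34
          norm_num at h34
    · constructor
      · nlinarith
      · exact ⟨fun _ => by trivial, fun _ => by nlinarith⟩
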